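/- arXiv:0903.2708 — 7 statements merged into one kernel-verified Lean document; each statement's English description precedes it below -/
import Mathlib

section
/- Let γ be a real number and z a bounded normal operator on a Hilbert space H such that z − z* = 2γi z*z and ker z = {0}. Then the (generally unbounded) operator A := z⁻¹ + iγ·I, defined on the range of z, is self-adjoint. -/
open ContinuousLinearMap in
/-- Let `γ ∈ ℝ` and `z` a bounded normal operator on a Hilbert space with
`z - z* = 2γi z*z` and trivial kernel.  Then the operator `A := z⁻¹ + iγ·I`,
defined on the range of `z` (i.e. the unbounded operator sending `z ψ` to
`ψ + iγ·(z ψ)`), is self-adjoint. -/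
theorem stmt_1 {H : Type*} [NormedAddCommGroup H] [InnerProductSpace ℂ H] [CompleteSpace H]
    (γ : ℝ) (z : H →L[ℂ] H) (hnormal : IsStarNormal z)
    (hrel : z - star z = (2 * (γ : ℂ) * Complex.I) • (star z * z))
    (hker : LinearMap.ker (z : H →ₗ[ℂ] H) = ⊥)
    (A : H →ₗ.[ℂ] H)
    (hdom : A.domain = LinearMap.range (z : H →ₗ[ℂ] H))
    (hA : ∀ (ψ : H) (h : z ψ ∈ A.domain), A ⟨z ψ, h⟩ = ψ + (Complex.I * (γ : ℂ)) • z ψ) :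
    IsSelfAdjoint A := by
  have hcomm : star z * z = z * star z := hnormal.star_comm_self
  have hcomm' : adjoint z * z = z * adjoint z := by rw [← star_eq_adjoint]; exact hcomm
  have hkerz : ∀ x : H, z x = 0 → x = 0 := by
    intro x hx
    have hinj : Function.Injective (z : H →ₗ[ℂ] H) := LinearMap.ker_eq_bot.mp hker
    have := hinj (a₁ := x) (a₂ := 0) (by simpa using hx)
    simpa using this
  -- kernel of star z is trivial
  have hkerstar : ∀ x : H, star z x = 0 → x = 0 := by
    intro x hx
    rw [star_eq_adjoint] at hx
    have h1 : (inner ℂ (adjoint z x) (adjoint z x) : ℂ) = inner ℂ (z x) (z x) := by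
      rw [adjoint_inner_left, ← comp_apply z, ← mul_def, ← hcomm', mul_def, comp_apply,
        adjoint_inner_right]
    rw [hx, inner_zero_right] at h1
    exact hkerz x (inner_self_eq_zero.mp h1.symm)
  -- membership in the domain
  have hmem : ∀ ψ : H, z ψ ∈ A.domain := by
    intro ψ; rw [hdom]; exact ⟨ψ, rfl⟩
  -- density of the domain
  have hdense : Dense (A.domain : Set H) := by
    rw [Submodule.dense_iff_topologicalClosure_eq_top, Submodule.topologicalClosure_eq_top_iff,
      Submodule.eq_bot_iff]
    intro y hy
    apply hkerstar
    apply ext_inner_left ℂ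
    intro v
    rw [inner_zero_right, star_eq_adjoint, adjoint_inner_right]
    exact (Submodule.mem_orthogonal _ y).mp hy (z v) (hmem v)
  -- key inner product identity
  have hkey : ∀ ψ φ : H, (inner ℂ ψ (z φ) : ℂ) - inner ℂ (z ψ) φ
      = (2 * (γ : ℂ) * Complex.I) * inner ℂ (z ψ) (z φ) := by
    intro ψ φ
    have h1 : (inner ℂ ψ ((z - star z) φ) : ℂ)
        = (2 * (γ : ℂ) * Complex.I) * inner ℂ ψ ((star z * z) φ) := by
      rw [hrel]; simp [inner_smul_right]
    simpa [inner_sub_right, star_eq_adjoint, adjoint_inner_left, adjoint_inner_right, mul_def,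
      comp_apply] using h1
  -- value of A on arbitrary elements
  have hAval : ∀ x : A.domain, ∃ ψ : H, (x : H) = z ψ ∧
      A x = ψ + (Complex.I * (γ : ℂ)) • z ψ := by
    intro x
    have hx : (x : H) ∈ LinearMap.range (z : H →ₗ[ℂ] H) := hdom ▸ x.2
    obtain ⟨ψ, hψ⟩ := hx
    have hx' : x = ⟨z ψ, hmem ψ⟩ := Subtype.ext (by simpa using hψ.symm)
    exact ⟨ψ, by simpa using hψ.symm, by rw [hx', hA ψ (hmem ψ)]⟩
  -- A is symmetric
  have hsym : A.IsFormalAdjoint A := by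
    intro x y
    obtain ⟨ψ, hxe, hxA⟩ := hAval x
    obtain ⟨φ, hye, hyA⟩ := hAval y
    rw [hxA, hyA, hxe, hye]
    simp only [inner_add_left, inner_add_right, inner_smul_left, inner_smul_right, map_mul,
      Complex.conj_I, Complex.conj_ofReal]
    linear_combination hkey ψ φ
  have hle : A ≤ LinearPMap.adjoint A := hsym.le_adjoint hdense
  have hdomle : (LinearPMap.adjoint A).domain ≤ A.domain := by
    intro y hy
    have hfa := LinearPMap.adjoint_isFormalAdjoint hdense (T := A) ⟨y, hy⟩
    set w := LinearPMap.adjoint A ⟨y, hy⟩ with hw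
    -- y = star z (w + iγ y)
    have hy' : y = star z (w + (Complex.I * (γ : ℂ)) • y) := by
      apply ext_inner_right ℂ
      intro ψ
      have h1 := hfa ⟨z ψ, hmem ψ⟩
      rw [hA ψ (hmem ψ)] at h1
      simp only [inner_add_right, inner_smul_right, Submodule.coe_mk] at h1
      rw [star_eq_adjoint, adjoint_inner_left]
      simp only [inner_add_left, inner_smul_left, map_mul, Complex.conj_I, Complex.conj_ofReal]
      linear_combination -h1
    -- star z v = z (v - 2γi star z v)
    have hstar : ∀ v : H, star z v = z (v - (2 * (γ : ℂ) * Complex.I) • star z v) := by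
      intro v
      have h1 := congrFun (congrArg DFunLike.coe hrel) v
      have h2 := congrFun (congrArg DFunLike.coe hcomm) v
      simp only [sub_apply, smul_apply, mul_def, comp_apply] at h1 h2
      rw [h2] at h1
      rw [map_sub, map_smul]
      have h3 : star z v = z v - (2 * (γ : ℂ) * Complex.I) • z (star z v) := by
        rw [← h1]; module
      exact h3
    rw [hdom]
    exact ⟨_, (hstar _).symm.trans hy'.symm⟩
  have : LinearPMap.adjoint A = A :=
    (LinearPMap.eq_of_le_of_domain_eq hle (le_antisymm hle.1 hdomle)).symm
  exact this
end

section
/- Let x₀, x₁, y be bounded operators on a Hilbert space satisfying x₀x₁ = x₁x₀ and x₀y − yx₁ = −β y x₁ x₀ y = −β x₀ y² x₁ for a real β. Then for every n ≥ 1, x₀ⁿ y = y x₁ⁿ + βi · y (x₁ⁿ − x₀ⁿ) y, provided additionally x₀ − x₁ = −i x₁x₀ = −i x₀x₁. -/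
theorem aux_stmt8 {A : Type*} [Ring A] [Algebra ℂ A] (c : ℂ) (a b u : A)
    (h : a * u = u * b + c • (u * b * u) - c • (u * a * u)) :
    ∀ n : ℕ, 1 ≤ n → a ^ n * u = u * b ^ n + c • (u * b ^ n * u) - c • (u * a ^ n * u) := by
  have hBr : u * b + c • (u * b * u) - a * u - c • (u * a * u) = 0 := by
    rw [h]; abel
  intro n hn
  induction n with
  | zero => omega
  | succ m ih =>
    rcases Nat.eq_zero_or_pos m with hm | hm
    · subst hm; simpa using h
    have ih' := ih hm
    have e1 : a ^ (m + 1) * u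
        = (a ^ m * u) * b + c • ((a ^ m * u) * (b * u)) - c • ((a ^ m * u) * (a * u)) := by
      conv_lhs => rw [pow_succ, mul_assoc, h]
      simp only [mul_sub, mul_add, mul_smul_comm, mul_assoc]
    rw [e1, ih']
    have e3 : (u * b ^ m + c • (u * b ^ m * u) - c • (u * a ^ m * u)) * b
          + c • ((u * b ^ m + c • (u * b ^ m * u) - c • (u * a ^ m * u)) * (b * u))
          - c • ((u * b ^ m + c • (u * b ^ m * u) - c • (u * a ^ m * u)) * (a * u))
        = (u * b ^ (m + 1) + c • (u * b ^ (m + 1) * u) - c • (u * a ^ (m + 1) * u))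
          + (c • ((u * b ^ m) * (u * b + c • (u * b * u) - a * u - c • (u * a * u)))
             - c • ((u * a ^ m) * (u * b + c • (u * b * u) - a * u - c • (u * a * u)))) := by
      simp only [pow_succ, mul_add, add_mul, mul_sub, sub_mul, smul_add, smul_sub,
        mul_smul_comm, smul_mul_assoc, smul_smul, mul_assoc]
      module
    rw [e3, hBr]
    simp

/-- Let `x₀, x₁, y` be bounded operators on a Hilbert space with
`x₀ - x₁ = -i x₁x₀ = -i x₀x₁` (in particular `x₀x₁ = x₁x₀`) and
`x₀y - yx₁ = -β y x₁ x₀ y = -β x₀ y² x₁` for a real `β`.  Then for every `n ≥ 1`,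
`x₀ⁿ y = y x₁ⁿ + βi · y (x₁ⁿ - x₀ⁿ) y`. -/
theorem stmt_8 {H : Type*} [NormedAddCommGroup H] [InnerProductSpace ℂ H] [CompleteSpace H]
    (β : ℝ) (x₀ x₁ y : H →L[ℂ] H)
    (hcomm : x₀ * x₁ = x₁ * x₀)
    (hdiff₁ : x₀ - x₁ = -Complex.I • (x₁ * x₀))
    (hdiff₂ : x₀ - x₁ = -Complex.I • (x₀ * x₁))
    (hrel₁ : x₀ * y - y * x₁ = -(β : ℂ) • (y * x₁ * x₀ * y))
    (hrel₂ : x₀ * y - y * x₁ = -(β : ℂ) • (x₀ * y ^ 2 * x₁)) :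
    ∀ n : ℕ, 1 ≤ n →
      x₀ ^ n * y = y * x₁ ^ n + ((β : ℂ) * Complex.I) • (y * (x₁ ^ n - x₀ ^ n) * y) := by
  set c : ℂ := (β : ℂ) * Complex.I with hc
  have hd : x₁ - x₀ = Complex.I • (x₁ * x₀) := by
    rw [← neg_sub, hdiff₁, neg_smul, neg_neg]
  have hbase : x₀ * y = y * x₁ + c • (y * x₁ * y) - c • (y * x₀ * y) := by
    have h1 : x₀ * y = y * x₁ + (-(β : ℂ)) • (y * x₁ * x₀ * y) := by
      rw [← hrel₁]; abel
    have h2 : c • (y * x₁ * y) - c • (y * x₀ * y) = (-(β : ℂ)) • (y * x₁ * x₀ * y) := by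
      have : c • (y * x₁ * y) - c • (y * x₀ * y) = c • (y * (x₁ - x₀) * y) := by
        simp only [mul_sub, sub_mul, smul_sub]
      rw [this, hd]
      simp only [smul_mul_assoc, mul_smul_comm, smul_smul]
      congr 1
      rw [hc]
      ring_nf
      rw [Complex.I_sq]
      ring
    rw [h1, ← h2]; abel
  intro n hn
  have := aux_stmt8 c x₀ x₁ y hbase n hn
  rw [this]
  simp only [mul_sub, sub_mul, smul_sub]
  abel
end

section
/- Let α, β be nonzero reals with |α| > 1, let x₀ and y be bounded operators on a Hilbert space with ‖x₀‖ ≤ |α|⁻¹, ‖y‖ ≤ |β|⁻¹, satisfying x₀y − yx₁ = −β x₀ y² x₁ for a bounded operator x₁. Then ‖β x₀ y‖ < 1, I − β x₀ y is invertible with inverse Σ_{n≥0} βⁿ (x₀y)ⁿ, and y x₁ = Σ_{n≥0} βⁿ (x₀y)^{n+1}; consequently (x₀y)(yx₁) = (yx₁)(x₀y). -/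
/-- Let `α, β` be nonzero reals with `|α| > 1` and let `x₀, x₁, y` be bounded operators
with `‖x₀‖ ≤ |α|⁻¹`, `‖y‖ ≤ |β|⁻¹` and `x₀y - yx₁ = -β x₀ y² x₁`.  Then `‖β x₀ y‖ < 1`,
`1 - β x₀ y` is invertible with inverse the Neumann series `Σ βⁿ (x₀y)ⁿ`,
`y x₁ = Σ βⁿ (x₀y)^{n+1}`, and consequently `(x₀y)(yx₁) = (yx₁)(x₀y)`. -/
theorem stmt_9 {H : Type*} [NormedAddCommGroup H] [InnerProductSpace ℂ H] [CompleteSpace H]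
    (α β : ℝ) (hα : 1 < |α|) (hβ : β ≠ 0)
    (x₀ x₁ y : H →L[ℂ] H)
    (hx₀ : ‖x₀‖ ≤ |α|⁻¹) (hy : ‖y‖ ≤ |β|⁻¹)
    (hrel : x₀ * y - y * x₁ = -(β : ℂ) • (x₀ * y ^ 2 * x₁)) :
    ‖(β : ℂ) • (x₀ * y)‖ < 1 ∧
    (1 - (β : ℂ) • (x₀ * y)) * (∑' n : ℕ, ((β : ℂ) • (x₀ * y)) ^ n) = 1 ∧
    (∑' n : ℕ, ((β : ℂ) • (x₀ * y)) ^ n) * (1 - (β : ℂ) • (x₀ * y)) = 1 ∧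
    y * x₁ = ∑' n : ℕ, ((β : ℂ) ^ n) • (x₀ * y) ^ (n + 1) ∧
    (x₀ * y) * (y * x₁) = (y * x₁) * (x₀ * y) := by
  set t : H →L[ℂ] H := (β : ℂ) • (x₀ * y) with ht
  have hnorm : ‖t‖ < 1 := by
    have h1 : ‖t‖ ≤ |β| * (‖x₀‖ * ‖y‖) := by
      calc ‖t‖ ≤ ‖(β : ℂ)‖ * ‖x₀ * y‖ := norm_smul_le _ _
        _ ≤ |β| * (‖x₀‖ * ‖y‖) := by
            rw [Complex.norm_real, Real.norm_eq_abs]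
            exact mul_le_mul_of_nonneg_left (norm_mul_le _ _) (abs_nonneg β)
    have hβ0 : (0:ℝ) < |β| := abs_pos.2 hβ
    have h2 : ‖x₀‖ * ‖y‖ ≤ |α|⁻¹ * |β|⁻¹ :=
      mul_le_mul hx₀ hy (norm_nonneg _) (by positivity)
    have : ‖t‖ ≤ |β| * (|α|⁻¹ * |β|⁻¹) :=
      le_trans h1 (mul_le_mul_of_nonneg_left h2 (abs_nonneg β))
    have heq : |β| * (|α|⁻¹ * |β|⁻¹) = |α|⁻¹ := by
      field_simp
    rw [heq] at this
    exact lt_of_le_of_lt this (by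
      rw [inv_lt_one_iff₀]; right; exact hα)
  have hmul1 : (1 - t) * (∑' n : ℕ, t ^ n) = 1 := mul_neg_geom_series t hnorm
  have hmul2 : (∑' n : ℕ, t ^ n) * (1 - t) = 1 := geom_series_mul_neg t hnorm
  -- rewrite relation
  have hrel' : x₀ * y = (1 - t) * (y * x₁) := by
    have : x₀ * y ^ 2 * x₁ = (x₀ * y) * (y * x₁) := by
      simp [pow_two, mul_assoc]
    rw [this] at hrel
    have := sub_eq_iff_eq_add.mp hrel
    rw [this]
    simp [ht, sub_mul, smul_mul_assoc]
    abel
  have hyx : y * x₁ = (∑' n : ℕ, t ^ n) * (x₀ * y) := by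
    have : (∑' n : ℕ, t ^ n) * (x₀ * y) = (∑' n : ℕ, t ^ n) * ((1 - t) * (y * x₁)) := by
      rw [hrel']
    rw [this, ← mul_assoc, hmul2, one_mul]
  have hpow : ∀ n : ℕ, t ^ n * (x₀ * y) = ((β : ℂ) ^ n) • (x₀ * y) ^ (n + 1) := by
    intro n
    rw [ht, smul_pow, smul_mul_assoc, pow_succ]
  have hsum : (∑' n : ℕ, t ^ n) * (x₀ * y) = ∑' n : ℕ, ((β : ℂ) ^ n) • (x₀ * y) ^ (n + 1) := by
    rw [← (summable_geometric_of_norm_lt_one hnorm).tsum_mul_right]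
    exact tsum_congr hpow
  have hyx' : y * x₁ = ∑' n : ℕ, ((β : ℂ) ^ n) • (x₀ * y) ^ (n + 1) := hyx.trans hsum
  refine ⟨hnorm, hmul1, hmul2, hyx', ?_⟩
  have hcomm : Commute (x₀ * y) (∑' n : ℕ, t ^ n) :=
    Commute.tsum_right _ fun n => ((Commute.refl (x₀ * y)).smul_right (β : ℂ)).pow_right n
  calc (x₀ * y) * (y * x₁) = (x₀ * y) * ((∑' n : ℕ, t ^ n) * (x₀ * y)) := by rw [hyx]
    _ = ((∑' n : ℕ, t ^ n) * (x₀ * y)) * (x₀ * y) := by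
        rw [← mul_assoc, hcomm.eq, mul_assoc]
    _ = (y * x₁) * (x₀ * y) := by rw [← hyx]
end

section
/- Let B be a unital *-algebra and let B_b be the set of all b ∈ B for which there exists λ > 0 with λ·1 − b*b ∈ ΣB² (the cone of finite sums of hermitian squares). Then B_b is a unital *-subalgebra of B. -/
namespace Vidav

variable {B : Type*} [Ring B] [StarRing B] [Algebra ℂ B] [StarModule ℂ B]

private def M (B : Type*) [Ring B] [StarRing B] : AddSubmonoid B :=
  AddSubmonoid.closure {x : B | ∃ c : B, x = star c * c}

omit [Algebra ℂ B] [StarModule ℂ B] in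
lemma sq_mem (c : B) : star c * c ∈ M B :=
  AddSubmonoid.subset_closure ⟨c, rfl⟩

omit [Algebra ℂ B] [StarModule ℂ B] in
lemma conj_mem {x : B} (hx : x ∈ M B) (d : B) : star d * x * d ∈ M B := by
  induction hx using AddSubmonoid.closure_induction with
  | mem y hy =>
    obtain ⟨c, rfl⟩ := hy
    have h : star d * (star c * c) * d = star (c * d) * (c * d) := by
      simp [star_mul, mul_assoc]
    rw [h]; exact sq_mem _
  | zero => simpa using (M B).zero_mem
  | add a b _ _ iha ihb =>
    have h : star d * (a + b) * d = star d * a * d + star d * b * d := by noncomm_ring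
    rw [h]; exact (M B).add_mem iha ihb

lemma rsmul_mem {r : ℝ} (hr : 0 ≤ r) {x : B} (hx : x ∈ M B) : (r : ℂ) • x ∈ M B := by
  induction hx using AddSubmonoid.closure_induction with
  | mem y hy =>
    obtain ⟨c, rfl⟩ := hy
    have h : (r : ℂ) • (star c * c)
        = star (((Real.sqrt r : ℂ)) • c) * (((Real.sqrt r : ℂ)) • c) := by
      rw [star_smul, smul_mul_smul_comm]
      congr 1
      rw [Complex.star_def, Complex.conj_ofReal, ← Complex.ofReal_mul,
        Real.mul_self_sqrt hr]
    rw [h]; exact sq_mem _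
  | zero => simpa using (M B).zero_mem
  | add a b _ _ iha ihb =>
    rw [smul_add]; exact (M B).add_mem iha ihb

def P (b : B) : Prop :=
  ∃ lam : ℝ, 0 < lam ∧ (lam : ℂ) • (1 : B) - star b * b ∈ M B

omit [StarModule ℂ B] in
lemma one_mem' : P (1 : B) := by
  refine ⟨2, by norm_num, ?_⟩
  have h : ((2 : ℝ) : ℂ) • (1 : B) - star (1 : B) * 1 = star (1 : B) * 1 := by
    push_cast
    simp [two_smul]
  rw [h]; exact sq_mem _

omit [StarModule ℂ B] in
lemma zero_mem' : P (0 : B) := by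
  refine ⟨1, by norm_num, ?_⟩
  have h : ((1 : ℝ) : ℂ) • (1 : B) - star (0 : B) * 0 = star (1 : B) * 1 := by
    push_cast; simp
  rw [h]; exact sq_mem _

lemma algebraMap_mem' (z : ℂ) : P (algebraMap ℂ B z) := by
  refine ⟨Complex.normSq z + 1, by have := Complex.normSq_nonneg z; linarith, ?_⟩
  have h : ((Complex.normSq z + 1 : ℝ) : ℂ) • (1 : B)
      - star (algebraMap ℂ B z) * (algebraMap ℂ B z) = star (1 : B) * 1 := by
    rw [Algebra.algebraMap_eq_smul_one, star_smul, smul_mul_smul_comm, mul_one,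
      Complex.star_def, mul_comm, Complex.mul_conj]
    push_cast
    rw [add_smul]
    simp
  rw [h]; exact sq_mem _

lemma star_mem' {b : B} (hb : P b) : P (star b) := by
  obtain ⟨lam, hl, hm⟩ := hb
  refine ⟨lam, hl, ?_⟩
  set t : B := b * star b with ht
  have h1 : b * ((lam : ℂ) • (1 : B) - star b * b) * star b ∈ M B := by
    simpa using conj_mem hm (star b)
  have h2 : ((lam : ℂ) • (1 : B) - t) * ((lam : ℂ) • (1 : B) - t) ∈ M B := by
    have hs : star ((lam : ℂ) • (1 : B) - t) = (lam : ℂ) • (1 : B) - t := by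
      simp [ht, star_smul, Complex.conj_ofReal, star_mul]
    have := sq_mem ((lam : ℂ) • (1 : B) - t)
    rwa [hs] at this
  have h3 := (M B).add_mem h1 h2
  have key : (lam : ℂ) • ((lam : ℂ) • (1 : B) - star (star b) * star b)
      = b * ((lam : ℂ) • (1 : B) - star b * b) * star b
        + ((lam : ℂ) • (1 : B) - t) * ((lam : ℂ) • (1 : B) - t) := by
    simp only [star_star, ht, smul_sub, mul_sub, sub_mul, smul_mul_assoc,
      mul_smul_comm, smul_smul, mul_one, one_mul, mul_assoc]
    abel
  have h4 : (lam : ℂ) • ((lam : ℂ) • (1 : B) - star (star b) * star b) ∈ M B := by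
    rw [key]; exact h3
  have h5 := rsmul_mem (le_of_lt (inv_pos.mpr hl)) h4
  rwa [smul_smul, ← Complex.ofReal_mul, inv_mul_cancel₀ (ne_of_gt hl),
    Complex.ofReal_one, one_smul] at h5

omit [StarModule ℂ B] in
lemma add_mem' {a b : B} (ha : P a) (hb : P b) : P (a + b) := by
  obtain ⟨la, hla, hma⟩ := ha
  obtain ⟨lb, hlb, hmb⟩ := hb
  refine ⟨2 * (la + lb), by positivity, ?_⟩
  have h3 := (M B).add_mem ((M B).add_mem ((M B).add_mem ((M B).add_mem hma hma) hmb) hmb)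
    (sq_mem (a - b))
  have key : ((2 * (la + lb) : ℝ) : ℂ) • (1 : B) - star (a + b) * (a + b)
      = (((la : ℂ) • (1 : B) - star a * a) + ((la : ℂ) • (1 : B) - star a * a)
        + ((lb : ℂ) • (1 : B) - star b * b) + ((lb : ℂ) • (1 : B) - star b * b))
        + star (a - b) * (a - b) := by
    push_cast
    simp only [star_add, star_sub, add_mul, mul_add, sub_mul, mul_sub, add_smul, smul_add,
      mul_smul, two_smul, mul_one, one_mul]
    abel
  rw [key]; exact h3

lemma mul_mem' {a b : B} (ha : P a) (hb : P b) : P (a * b) := by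
  obtain ⟨la, hla, hma⟩ := ha
  obtain ⟨lb, hlb, hmb⟩ := hb
  refine ⟨la * lb, by positivity, ?_⟩
  have h1 : star b * ((la : ℂ) • (1 : B) - star a * a) * b ∈ M B := conj_mem hma b
  have h2 : (la : ℂ) • ((lb : ℂ) • (1 : B) - star b * b) ∈ M B :=
    rsmul_mem (le_of_lt hla) hmb
  have key : ((la * lb : ℝ) : ℂ) • (1 : B) - star (a * b) * (a * b)
      = star b * ((la : ℂ) • (1 : B) - star a * a) * b
        + (la : ℂ) • ((lb : ℂ) • (1 : B) - star b * b) := by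
    push_cast
    simp only [star_mul, mul_sub, sub_mul, smul_sub, smul_mul_assoc, mul_smul_comm,
      smul_smul, mul_one, one_mul, mul_assoc]
    abel
  rw [key]; exact (M B).add_mem h1 h2

end Vidav

/-- Vidav: in a unital `*`-algebra `B`, the set
`B_b = {b | ∃ λ > 0, λ·1 - b*b ∈ ΣB²}` of bounded elements is a unital
`*`-subalgebra of `B`. -/
theorem stmt_11 {B : Type*} [Ring B] [StarRing B] [Algebra ℂ B] [StarModule ℂ B] :
    ∃ S : StarSubalgebra ℂ B, (S : Set B) =
      {b : B | ∃ lam : ℝ, 0 < lam ∧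
        (lam : ℂ) • (1 : B) - star b * b ∈
          AddSubmonoid.closure {x : B | ∃ c : B, x = star c * c}} := by
  refine ⟨{ carrier := {b : B | Vidav.P b}
            mul_mem' := Vidav.mul_mem'
            one_mem' := Vidav.one_mem'
            add_mem' := Vidav.add_mem'
            zero_mem' := Vidav.zero_mem'
            algebraMap_mem' := Vidav.algebraMap_mem'
            star_mem' := Vidav.star_mem' }, rfl⟩
end

section
/- Let X be the unital *-subalgebra of the localized Weyl algebra generated by x = (p − αi)⁻¹ and y = (q − βi)⁻¹ (α, β nonzero reals), with relations x − x* = 2iα x*x and y − y* = 2iβ y*y. Then 1 − α² x*x = (1 + iαx)*(1 + iαx) and 1 − β² y*y = (1 + iβy)*(1 + iβy) in X; consequently X is algebraically bounded (X = X_b). -/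
set_option linter.unusedSectionVars false

section Aux
variable {X : Type*} [Ring X] [StarRing X] [Algebra ℂ X] [StarModule ℂ X]

def SOS (X : Type*) [Ring X] [StarRing X] : AddSubmonoid X :=
  AddSubmonoid.closure {w : X | ∃ c : X, w = star c * c}

theorem sq_mem (c : X) : star c * c ∈ SOS X :=
  AddSubmonoid.subset_closure ⟨c, rfl⟩

theorem one_mem_sos : (1 : X) ∈ SOS X := by
  simpa using sq_mem (1 : X)

theorem conj_mem (a : X) {s : X} (hs : s ∈ SOS X) : star a * s * a ∈ SOS X := by
  induction hs using AddSubmonoid.closure_induction with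
  | mem w hw =>
    obtain ⟨c, rfl⟩ := hw
    have : star a * (star c * c) * a = star (c * a) * (c * a) := by
      rw [star_mul]; noncomm_ring
    rw [this]; exact sq_mem _
  | zero => simpa using (SOS X).zero_mem
  | add u v hu hv ihu ihv =>
    have : star a * (u + v) * a = star a * u * a + star a * v * a := by noncomm_ring
    rw [this]; exact add_mem ihu ihv

theorem smul_mem_sos {r : ℝ} (hr : 0 ≤ r) {s : X} (hs : s ∈ SOS X) :
    (r : ℂ) • s ∈ SOS X := by
  induction hs using AddSubmonoid.closure_induction with
  | mem w hw =>
    obtain ⟨c, rfl⟩ := hw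
    have key : (r : ℂ) • (star c * c)
        = star (((Real.sqrt r : ℝ) : ℂ) • c) * (((Real.sqrt r : ℝ) : ℂ) • c) := by
      rw [star_smul, smul_mul_assoc, mul_smul_comm, smul_smul]
      congr 1
      simp only [Complex.star_def, Complex.conj_ofReal]
      norm_cast
      rw [Real.mul_self_sqrt hr]
    rw [key]; exact sq_mem _
  | zero => simpa using (SOS X).zero_mem
  | add u v hu hv ihu ihv => rw [smul_add]; exact add_mem ihu ihv

/-- The set of algebraically bounded elements, as a subalgebra. -/
def bddSubalgebra (X : Type*) [Ring X] [StarRing X] [Algebra ℂ X] [StarModule ℂ X] :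
    Subalgebra ℂ X where
  carrier := {b | ∃ lam : ℝ, 0 < lam ∧ (lam : ℂ) • (1 : X) - star b * b ∈ SOS X}
  one_mem' := by
    refine ⟨2, by norm_num, ?_⟩
    have : ((2:ℝ) : ℂ) • (1 : X) - star 1 * 1 = 1 := by
      rw [star_one, one_mul]; push_cast; module
    rw [this]; exact one_mem_sos
  zero_mem' := by
    refine ⟨1, by norm_num, ?_⟩
    have : ((1:ℝ) : ℂ) • (1 : X) - star 0 * 0 = 1 := by
      rw [mul_zero]; push_cast; module
    rw [this]; exact one_mem_sos
  algebraMap_mem' := fun c => by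
    refine ⟨Complex.normSq c + 1, by have := Complex.normSq_nonneg c; linarith, ?_⟩
    have h1 : star (algebraMap ℂ X c) * algebraMap ℂ X c
        = ((Complex.normSq c : ℝ) : ℂ) • (1 : X) := by
      rw [Algebra.algebraMap_eq_smul_one, star_smul, star_one, smul_mul_assoc,
        mul_smul_comm, mul_one, smul_smul]
      congr 1
      rw [Complex.star_def, mul_comm, Complex.mul_conj]
    have h2 : ((Complex.normSq c + 1 : ℝ) : ℂ) • (1 : X)
        - ((Complex.normSq c : ℝ) : ℂ) • (1 : X) = 1 := by
      push_cast; module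
    rw [h1, h2]; exact one_mem_sos
  add_mem' := fun {a b} ha hb => by
    obtain ⟨l1, hl1, h1⟩ := ha
    obtain ⟨l2, hl2, h2⟩ := hb
    refine ⟨2 * (l1 + l2), by positivity, ?_⟩
    have key : ((2 * (l1 + l2) : ℝ) : ℂ) • (1 : X) - star (a + b) * (a + b)
        = (((l1 : ℂ) • (1:X) - star a * a) + ((l1 : ℂ) • (1:X) - star a * a))
          + (((l2 : ℂ) • (1:X) - star b * b) + ((l2 : ℂ) • (1:X) - star b * b))
          + star (a - b) * (a - b) := by
      simp only [star_add, star_sub, add_mul, mul_add, sub_mul, mul_sub]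
      push_cast
      module
    rw [key]
    exact add_mem (add_mem (add_mem h1 h1) (add_mem h2 h2)) (sq_mem _)
  mul_mem' := fun {a b} ha hb => by
    obtain ⟨l1, hl1, h1⟩ := ha
    obtain ⟨l2, hl2, h2⟩ := hb
    refine ⟨l1 * l2, by positivity, ?_⟩
    have e : star b * ((l1 : ℂ) • (1:X) - star a * a) * b
        = (l1 : ℂ) • (star b * b) - star (a * b) * (a * b) := by
      rw [star_mul, mul_sub, sub_mul]
      congr 1
      · rw [mul_smul_comm, smul_mul_assoc, mul_one]
      · noncomm_ring
    have key : ((l1 * l2 : ℝ) : ℂ) • (1 : X) - star (a * b) * (a * b)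
        = (l1 : ℂ) • ((l2 : ℂ) • (1:X) - star b * b)
          + star b * ((l1 : ℂ) • (1:X) - star a * a) * b := by
      rw [e]; push_cast; module
    rw [key]
    exact add_mem (smul_mem_sos hl1.le h2) (conj_mem b h1)

end Aux

section Key
variable {X : Type*} [Ring X] [StarRing X] [Algebra ℂ X] [StarModule ℂ X]

theorem key_id (α : ℝ) (x : X)
    (hrel : x - star x = (2 * Complex.I * (α : ℂ)) • (star x * x)) :
    (1 : X) - ((α : ℂ) ^ 2) • (star x * x) =
      star (1 + (Complex.I * (α : ℂ)) • x) * (1 + (Complex.I * (α : ℂ)) • x) := by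
  set c : ℂ := Complex.I * (α : ℂ) with hcdef
  have hc : star (1 + c • x) = 1 + (-c) • star x := by
    rw [star_add, star_one, star_smul]
    congr 2
    simp [hcdef, Complex.star_def, Complex.conj_ofReal]
  have hcc : -(c * c) = ((α : ℂ))^2 := by
    rw [hcdef]; ring_nf; rw [Complex.I_sq]; ring
  have h4 : c * (2 * Complex.I * (α : ℂ)) = -(2 * (α:ℂ)^2) := by
    rw [hcdef]; ring_nf; rw [Complex.I_sq]; ring
  symm
  calc star (1 + c • x) * (1 + c • x)
      = (1 + (-c) • star x) * (1 + c • x) := by rw [hc]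
    _ = 1 + c • (x - star x) + (-(c*c)) • (star x * x) := by
        simp only [add_mul, mul_add, one_mul, mul_one, neg_smul, neg_mul, smul_mul_assoc,
          mul_smul_comm, smul_smul, smul_sub]
        module
    _ = 1 + c • ((2 * Complex.I * (α : ℂ)) • (star x * x)) + ((α:ℂ)^2) • (star x * x) := by
        rw [hrel, hcc]
    _ = 1 + (-(2 * (α:ℂ)^2)) • (star x * x) + ((α:ℂ)^2) • (star x * x) := by
        rw [smul_smul, h4]
    _ = 1 - ((α:ℂ)^2) • (star x * x) := by module

/-- A normal generator satisfying the resolvent relation is bounded. -/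
theorem gen_bdd (α : ℝ) (hα : α ≠ 0) (x : X)
    (hrel : x - star x = (2 * Complex.I * (α : ℂ)) • (star x * x)) :
    x ∈ bddSubalgebra X := by
  refine ⟨(α^2)⁻¹, by positivity, ?_⟩
  have h1 : (1 : X) - ((α : ℂ) ^ 2) • (star x * x) ∈ SOS X := by
    rw [key_id α x hrel]; exact sq_mem _
  have h2 : (((α^2)⁻¹ : ℝ) : ℂ) • ((1 : X) - ((α : ℂ) ^ 2) • (star x * x))
      = (((α^2)⁻¹ : ℝ) : ℂ) • (1 : X) - star x * x := by
    rw [smul_sub, smul_smul]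
    have hne : ((α : ℂ))^2 ≠ 0 := pow_ne_zero 2 (Complex.ofReal_ne_zero.mpr hα)
    have : (((α^2)⁻¹ : ℝ) : ℂ) * (α : ℂ)^2 = 1 := by
      push_cast
      exact inv_mul_cancel₀ hne
    rw [this, one_smul]
  rw [← h2]
  exact smul_mem_sos (by positivity) h1

end Key

/-- Let `X` be the unital `*`-algebra generated by `x = (p - αi)⁻¹` and `y = (q - βi)⁻¹`
(`α, β` nonzero reals) with the relations `x - x* = 2iα x*x`, `y - y* = 2iβ y*y`
(and normality of `x, y`).  Then `1 - α² x*x = (1 + iαx)*(1 + iαx)` and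
`1 - β² y*y = (1 + iβy)*(1 + iβy)`; consequently `X` is algebraically bounded:
every `b ∈ X` satisfies `λ·1 - b*b ∈ ΣX²` for some `λ > 0`. -/
theorem stmt_13 {X : Type*} [Ring X] [StarRing X] [Algebra ℂ X] [StarModule ℂ X]
    (α β : ℝ) (hα : α ≠ 0) (hβ : β ≠ 0) (x y : X)
    (hgen : Algebra.adjoin ℂ ({x, y, star x, star y} : Set X) = ⊤)
    (hxrel : x - star x = (2 * Complex.I * (α : ℂ)) • (star x * x))
    (hyrel : y - star y = (2 * Complex.I * (β : ℂ)) • (star y * y))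
    (hxn : x * star x = star x * x) (hyn : y * star y = star y * y) :
    (1 : X) - ((α : ℂ) ^ 2) • (star x * x) =
      star (1 + (Complex.I * (α : ℂ)) • x) * (1 + (Complex.I * (α : ℂ)) • x) ∧
    (1 : X) - ((β : ℂ) ^ 2) • (star y * y) =
      star (1 + (Complex.I * (β : ℂ)) • y) * (1 + (Complex.I * (β : ℂ)) • y) ∧
    ∀ b : X, ∃ lam : ℝ, 0 < lam ∧
      (lam : ℂ) • (1 : X) - star b * b ∈
        AddSubmonoid.closure {w : X | ∃ c : X, w = star c * c} := by
  have hx : x ∈ bddSubalgebra X := gen_bdd α hα x hxrel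
  have hy : y ∈ bddSubalgebra X := gen_bdd β hβ y hyrel
  have hxs : star x ∈ bddSubalgebra X := by
    obtain ⟨l, hl, h⟩ := hx
    exact ⟨l, hl, by rwa [star_star, hxn]⟩
  have hys : star y ∈ bddSubalgebra X := by
    obtain ⟨l, hl, h⟩ := hy
    exact ⟨l, hl, by rwa [star_star, hyn]⟩
  have hsub : ({x, y, star x, star y} : Set X) ⊆ (bddSubalgebra X : Set X) := by
    intro b hb
    simp only [Set.mem_insert_iff, Set.mem_singleton_iff] at hb
    rcases hb with rfl | rfl | rfl | rfl
    · exact hx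
    · exact hy
    · exact hxs
    · exact hys
  refine ⟨key_id α x hxrel, key_id β y hyrel, fun b => ?_⟩
  have hb : b ∈ bddSubalgebra X :=
    Algebra.adjoin_le hsub (hgen ▸ Algebra.mem_top)
  exact hb
end

section
/- Let A, B be self-adjoint operators on a Hilbert space H, α < −1 and β ≠ 0 reals, x₀ = (A − αi)⁻¹, x₁ = (A − (α+1)i)⁻¹, y = (B − βi)⁻¹. Suppose D ⊆ dom(AB) ∩ dom(BA) satisfies ABφ − BAφ = iBφ for φ ∈ D, and that D₁ := (B − βi)(A − αi)D is dense in H. Then the bounded-operator relation x₀y = y x₁ − β y x₀ x₁ y holds on all of H. -/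
/-- `r` is the (bounded, everywhere defined) resolvent `(c•A - μ)⁻¹` of the
(possibly unbounded) operator `A`. -/
def IsResolventOf {H : Type*} [NormedAddCommGroup H] [InnerProductSpace ℂ H]
    (A : H →ₗ.[ℂ] H) (c μ : ℂ) (r : H →L[ℂ] H) : Prop :=
  (∀ ψ : H, ∃ h : r ψ ∈ A.domain, c • A ⟨r ψ, h⟩ - μ • r ψ = ψ) ∧
  ∀ φ : A.domain, r (c • A φ - μ • (φ : H)) = (φ : H)

/-- Let `A, B` be self-adjoint, `α < -1`, `β ≠ 0`, with resolvents `x₀ = (A - αi)⁻¹`,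
`x₁ = (A - (α+1)i)⁻¹`, `y = (B - βi)⁻¹`.  If `D ⊆ dom(AB) ∩ dom(BA)` satisfies
`ABφ - BAφ = iBφ` on `D` and `D₁ = (B - βi)(A - αi)D` is dense in `H`, then
`x₀ y = y x₁ - β y x₀ x₁ y` holds on all of `H`. -/
theorem stmt_16 {H : Type*} [NormedAddCommGroup H] [InnerProductSpace ℂ H] [CompleteSpace H]
    (A B : H →ₗ.[ℂ] H) (hA : IsSelfAdjoint A) (hB : IsSelfAdjoint B)
    (α β : ℝ) (hα : α < -1) (hβ : β ≠ 0)
    (x₀ x₁ y : H →L[ℂ] H)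
    (hx₀ : IsResolventOf A 1 ((α : ℂ) * Complex.I) x₀)
    (hx₁ : IsResolventOf A 1 (((α : ℂ) + 1) * Complex.I) x₁)
    (hy : IsResolventOf B 1 ((β : ℂ) * Complex.I) y)
    (D : Set H)
    (hcomm : ∀ φ ∈ D, ∃ (hφA : φ ∈ A.domain) (hφB : φ ∈ B.domain)
      (h₁ : A ⟨φ, hφA⟩ ∈ B.domain) (h₂ : B ⟨φ, hφB⟩ ∈ A.domain),
      A ⟨B ⟨φ, hφB⟩, h₂⟩ - B ⟨A ⟨φ, hφA⟩, h₁⟩ = Complex.I • B ⟨φ, hφB⟩)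
    (hdense : Dense {χ : H | ∃ φ, ∃ _ : φ ∈ D, ∃ (hφA : φ ∈ A.domain)
      (h₂ : A ⟨φ, hφA⟩ - ((α : ℂ) * Complex.I) • φ ∈ B.domain),
      B ⟨A ⟨φ, hφA⟩ - ((α : ℂ) * Complex.I) • φ, h₂⟩ -
        ((β : ℂ) * Complex.I) • (A ⟨φ, hφA⟩ - ((α : ℂ) * Complex.I) • φ) = χ}) :
    x₀ * y = y * x₁ - (β : ℂ) • (y * (x₀ * (x₁ * y))) := by
  refine ContinuousLinearMap.coeFn_injective
    (Continuous.ext_on hdense (map_continuous _) (map_continuous _) ?_)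
  rintro χ ⟨φ, hφD, hφA, h₂, rfl⟩
  obtain ⟨hφA', hφB, hAB, hBA, hrel⟩ := hcomm φ hφD
  set ψ : H := A ⟨φ, hφA⟩ - ((α : ℂ) * Complex.I) • φ with hψ
  -- y χ = ψ
  have hyχ : y (B ⟨ψ, h₂⟩ - ((β : ℂ) * Complex.I) • ψ) = ψ := by
    have := hy.2 ⟨ψ, h₂⟩
    simpa using this
  -- x₀ ψ = φ
  have hx₀ψ : x₀ ψ = φ := by
    have := hx₀.2 ⟨φ, hφA⟩
    simpa [hψ] using this
  -- ξ := (B - βi) φ ∈ A.domain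
  have hξ : B ⟨φ, hφB⟩ - ((β : ℂ) * Complex.I) • φ ∈ A.domain :=
    Submodule.sub_mem _ hBA (Submodule.smul_mem _ _ hφA)
  set ξ : H := B ⟨φ, hφB⟩ - ((β : ℂ) * Complex.I) • φ with hξdef
  -- A ξ decomposition
  have hAξ : A ⟨ξ, hξ⟩ = A ⟨B ⟨φ, hφB⟩, hBA⟩ - ((β : ℂ) * Complex.I) • A ⟨φ, hφA⟩ := by
    have : (⟨ξ, hξ⟩ : A.domain) = ⟨B ⟨φ, hφB⟩, hBA⟩ - ((β : ℂ) * Complex.I) • ⟨φ, hφA⟩ := rfl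
    rw [this, A.map_sub, A.map_smul]
  -- B ψ decomposition
  have hBψ : B ⟨ψ, h₂⟩ = B ⟨A ⟨φ, hφA⟩, hAB⟩ - ((α : ℂ) * Complex.I) • B ⟨φ, hφB⟩ := by
    have : (⟨ψ, h₂⟩ : B.domain) = ⟨A ⟨φ, hφA⟩, hAB⟩ - ((α : ℂ) * Complex.I) • ⟨φ, hφB⟩ := rfl
    rw [this, B.map_sub, B.map_smul]
  -- χ = (A - (α+1)i) ξ + β φ
  have hχeq : B ⟨ψ, h₂⟩ - ((β : ℂ) * Complex.I) • ψ
      = (A ⟨ξ, hξ⟩ - (((α : ℂ) + 1) * Complex.I) • ξ) + (β : ℂ) • φ := by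
    rw [hBψ, hAξ, hξdef, hψ]
    have hrel' : A ⟨B ⟨φ, hφB⟩, hBA⟩ = B ⟨A ⟨φ, hφA⟩, hAB⟩ + Complex.I • B ⟨φ, hφB⟩ := by
      have := hrel
      rw [sub_eq_iff_eq_add'] at this
      exact this
    rw [hrel']
    have hI : (Complex.I : ℂ) * Complex.I = -1 := Complex.I_mul_I
    set b1 := B ⟨A ⟨φ, hφA⟩, hAB⟩
    set b0 := B ⟨φ, hφB⟩
    set a0 := A ⟨φ, hφA⟩
    simp only [smul_sub, smul_smul, smul_add, add_smul, sub_smul, one_smul]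
    rw [show ((β : ℂ) * Complex.I) * ((α : ℂ) * Complex.I) = -((β : ℂ) * (α : ℂ)) by
      rw [mul_mul_mul_comm, hI]; ring,
      show (((α : ℂ) + 1) * Complex.I) * ((β : ℂ) * Complex.I) = -(((α : ℂ) + 1) * (β : ℂ)) by
      rw [mul_mul_mul_comm, hI]; ring]
    module
  -- x₁ of (A - (α+1)i) ξ
  have hx₁ξ : x₁ (A ⟨ξ, hξ⟩ - (((α : ℂ) + 1) * Complex.I) • ξ) = ξ := by
    have := hx₁.2 ⟨ξ, hξ⟩
    simpa using this
  -- y ξ = φ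
  have hyξ : y ξ = φ := by
    have := hy.2 ⟨φ, hφB⟩
    simpa [hξdef] using this
  -- x₁ ψ = φ + i • x₁ φ
  have hx₁ψ : x₁ ψ = φ + Complex.I • x₁ φ := by
    have h := hx₁.2 ⟨φ, hφA⟩
    simp only [one_smul] at h
    have : ψ = (A ⟨φ, hφA⟩ - (((α : ℂ) + 1) * Complex.I) • φ) + Complex.I • φ := by
      rw [hψ]; module
    rw [this, map_add, h, map_smul]
  -- x₀ (φ + i • x₁ φ) = x₁ φ
  have hx₀key : x₀ (φ + Complex.I • x₁ φ) = x₁ φ := by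
    obtain ⟨hmem, hval⟩ := hx₁.1 φ
    simp only [one_smul] at hval
    have h2 : A ⟨x₁ φ, hmem⟩ - ((α : ℂ) * Complex.I) • x₁ φ = φ + Complex.I • x₁ φ :=
      calc A ⟨x₁ φ, hmem⟩ - ((α : ℂ) * Complex.I) • x₁ φ
          = (A ⟨x₁ φ, hmem⟩ - (((α : ℂ) + 1) * Complex.I) • x₁ φ) + Complex.I • x₁ φ := by
            module
        _ = φ + Complex.I • x₁ φ := by rw [hval]
    have := hx₀.2 ⟨x₁ φ, hmem⟩
    simp only [one_smul] at this
    rw [h2] at this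
    exact this
  -- conclude
  simp only [ContinuousLinearMap.mul_apply, ContinuousLinearMap.sub_apply,
    ContinuousLinearMap.smul_apply]
  rw [hyχ, hx₀ψ, hχeq, map_add, hx₁ξ, map_add, hyξ, map_smul, map_smul, hx₁ψ, hx₀key]
  module
end

section
/- Let H be a Hilbert space and (E_n, ‖·‖_n), n ≥ 0, a sequence of Hilbert spaces with E₀ = H, E_{n+1} ⊆ E_n, ‖·‖_n ≤ c_n ‖·‖_{n+1} for constants c_n > 0, and E_{n+1} dense in (E_n, ‖·‖_n) for all n. Then E_∞ := ∩_n E_n is dense in H (Mittag-Leffler lemma for a decreasing chain of Hilbert spaces). -/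
open Filter Topology

/-- Composite inclusion `E (m+k) → E m`. -/
noncomputable def stmtR {E : ℕ → Type*} [∀ n, NormedAddCommGroup (E n)]
    [∀ n, InnerProductSpace ℂ (E n)] (j : ∀ n : ℕ, E (n + 1) →L[ℂ] E n) :
    ∀ (m k : ℕ), E (m + k) →L[ℂ] E m
  | m, 0 => ContinuousLinearMap.id ℂ (E m)
  | m, k + 1 => (stmtR j m k).comp (j (m + k))

theorem stmtR_comp {E : ℕ → Type*} [∀ n, NormedAddCommGroup (E n)]
    [∀ n, InnerProductSpace ℂ (E n)] (j : ∀ n : ℕ, E (n + 1) →L[ℂ] E n)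
    {H : Type*} [NormedAddCommGroup H] [InnerProductSpace ℂ H]
    (ι : ∀ n : ℕ, E n →L[ℂ] H) (hι : ∀ n : ℕ, ι (n + 1) = (ι n).comp (j n)) :
    ∀ (m k : ℕ), ι (m + k) = (ι m).comp (stmtR j m k) := by
  intro m k
  induction k with
  | zero => rfl
  | succ k ih =>
    show ι ((m + k) + 1) = _
    rw [hι (m + k), ih]
    rfl

/-- Mittag-Leffler lemma for a decreasing chain of Hilbert spaces.  Let `H` be a Hilbert
space and `(Eₙ, ‖·‖ₙ)` a sequence of Hilbert spaces with `E₀ = H` (via the isometric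
isomorphism `ι 0`), continuous injective inclusions `j n : E_{n+1} ↪ Eₙ` with dense range
(so `E_{n+1} ⊆ Eₙ` with `‖·‖ₙ ≤ cₙ ‖·‖_{n+1}` and `E_{n+1}` dense in `(Eₙ, ‖·‖ₙ)`).
Then `E_∞ = ∩ₙ Eₙ`, realized in `H` as the set of vectors lying in the range of every
composite inclusion `ι n : Eₙ → H`, is dense in `H`. -/
theorem stmt_19 {H : Type*} [NormedAddCommGroup H] [InnerProductSpace ℂ H] [CompleteSpace H]
    (E : ℕ → Type*) [∀ n, NormedAddCommGroup (E n)] [∀ n, InnerProductSpace ℂ (E n)]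
    [∀ n, CompleteSpace (E n)]
    (j : ∀ n : ℕ, E (n + 1) →L[ℂ] E n)
    (hj_inj : ∀ n, Function.Injective (j n))
    (hj_dense : ∀ n, DenseRange (j n))
    (ι : ∀ n : ℕ, E n →L[ℂ] H)
    (hι0_iso : Isometry (ι 0)) (hι0_surj : Function.Surjective (ι 0))
    (hι : ∀ n : ℕ, ι (n + 1) = (ι n).comp (j n)) :
    Dense {x : H | ∀ n : ℕ, x ∈ Set.range (ι n)} := by
  rw [Metric.dense_iff]
  intro x r hr
  set ε : ℝ := r / 2 with hε
  have hεpos : 0 < ε := by positivity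
  obtain ⟨x0, hx0⟩ := hι0_surj x
  -- bound on the norms of the composite maps
  set R := stmtR j with hR
  set B : ℕ → ℝ := fun n => ∑ m ∈ Finset.range (n + 1), ‖R m (n - m)‖ with hB
  have hBnonneg : ∀ n, 0 ≤ B n := fun n =>
    Finset.sum_nonneg fun m _ => norm_nonneg _
  have hRB : ∀ m k, ‖R m k‖ ≤ B (m + k) := by
    intro m k
    have : ‖R m ((m + k) - m)‖ ≤ B (m + k) := by
      refine Finset.single_le_sum (f := fun i => ‖R i ((m + k) - i)‖)
        (fun i _ => norm_nonneg _) ?_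
      simp
    rwa [Nat.add_sub_cancel_left] at this
  set δ : ℕ → ℝ := fun n => (ε / 2) * (1 / 2) ^ n / (1 + B n) with hδ
  have hδpos : ∀ n, 0 < δ n := by
    intro n
    have := hBnonneg n
    positivity
  -- construct the approximating sequence u
  have hex : ∀ n (z : E n), ∃ y : E (n + 1), dist z (j n y) < δ n := fun n z =>
    (hj_dense n).exists_dist_lt z (hδpos n)
  choose g hg using hex
  set u : ∀ n, E n := fun n => Nat.rec x0 g n with hu
  have hustep : ∀ n, dist (u n) (j n (u (n + 1))) < δ n := fun n => hg n (u n)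
  set v : ∀ m, ℕ → E m := fun m k => R m k (u (m + k)) with hv
  -- geometric bound on increments
  have hinc : ∀ m k, dist (v m k) (v m (k + 1)) ≤ (ε / 2) * (1 / 2) ^ k := by
    intro m k
    have h1 : v m (k + 1) = R m k (j (m + k) (u (m + k + 1))) := rfl
    have h2 : dist (v m k) (v m (k + 1)) ≤ ‖R m k‖ * dist (u (m + k)) (j (m + k) (u (m + k + 1))) := by
      rw [h1, dist_eq_norm, dist_eq_norm, ← map_sub]
      exact (R m k).le_opNorm _
    have h3 : dist (u (m + k)) (j (m + k) (u (m + k + 1))) ≤ δ (m + k) :=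
      (hustep (m + k)).le
    have h4 : ‖R m k‖ * dist (u (m + k)) (j (m + k) (u (m + k + 1))) ≤ B (m + k) * δ (m + k) := by
      apply mul_le_mul (hRB m k) h3 dist_nonneg (hBnonneg _)
    have h5 : B (m + k) * δ (m + k) ≤ (ε / 2) * (1 / 2) ^ (m + k) := by
      rw [hδ]
      have hB1 : (0:ℝ) < 1 + B (m + k) := by have := hBnonneg (m + k); linarith
      rw [mul_div_assoc', div_le_iff₀ hB1]
      have : (0:ℝ) ≤ (ε / 2) * (1 / 2) ^ (m + k) := by positivity
      nlinarith [hBnonneg (m + k)]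
    have h6 : (ε / 2) * ((1:ℝ) / 2) ^ (m + k) ≤ (ε / 2) * (1 / 2) ^ k := by
      apply mul_le_mul_of_nonneg_left _ (by positivity)
      apply pow_le_pow_of_le_one (by norm_num) (by norm_num)
      omega
    linarith
  -- each v m is Cauchy, hence converges
  have hcauchy : ∀ m, CauchySeq (v m) := fun m =>
    cauchySeq_of_le_geometric (1/2) (ε/2) (by norm_num) (hinc m)
  have hlim : ∀ m, ∃ y : E m, Tendsto (v m) atTop (𝓝 y) := fun m =>
    cauchySeq_tendsto_of_complete (hcauchy m)
  choose Y hY using hlim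
  -- the sequence w in H
  set w : ℕ → H := fun n => ι n (u n) with hw
  have hvw : ∀ m k, ι m (v m k) = w (m + k) := by
    intro m k
    show ι m (stmtR j m k (u (m + k))) = ι (m + k) (u (m + k))
    rw [stmtR_comp j ι hι m k]
    rfl
  have hwtend : ∀ m, Tendsto (fun k => w (m + k)) atTop (𝓝 (ι m (Y m))) := by
    intro m
    have h1 := ((ι m).continuous.tendsto (Y m)).comp (hY m)
    have heq : (fun k => w (m + k)) = (⇑(ι m)) ∘ v m := funext fun k => (hvw m k).symm
    rw [heq]
    exact h1
  set y : H := ι 0 (Y 0) with hy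
  have hwy : Tendsto w atTop (𝓝 y) := by
    have h0 := hwtend 0
    have : (fun k => w (0 + k)) = w := by funext k; rw [Nat.zero_add]
    rwa [this] at h0
  -- all limits agree
  have hmem : ∀ m, ι m (Y m) = y := by
    intro m
    have htail : Tendsto (fun k => w (m + k)) atTop (𝓝 y) := by
      have : (fun k => w (m + k)) = w ∘ (fun k => k + m) := by
        funext k; simp [Function.comp, Nat.add_comm]
      rw [this]
      exact hwy.comp (tendsto_add_atTop_nat m)
    exact tendsto_nhds_unique (hwtend m) htail
  refine ⟨y, ?_, fun m => ⟨Y m, hmem m⟩⟩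
  -- distance estimate
  have hd0 : dist (v 0 0) (Y 0) ≤ (ε / 2) / (1 - 1/2) :=
    dist_le_of_le_geometric_of_tendsto₀ (1/2) (ε/2) (by norm_num) (hinc 0) (hY 0)
  have hv00 : v 0 0 = x0 := rfl
  rw [Metric.mem_ball]
  have hdxy : dist y x = dist x0 (Y 0) := by
    rw [hy, ← hx0, hι0_iso.dist_eq, dist_comm]
  rw [hdxy]
  rw [hv00] at hd0
  calc dist x0 (Y 0) ≤ (ε / 2) / (1 - 1/2) := hd0
    _ = ε := by ring
    _ < r := by rw [hε]; linarith
end
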